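/- For a linear system with a non-orthonormal basis of the estimation space, the unobservability level is given by the smallest generalized eigenvalue: inf { ∫_0^T ‖y_{x̂}(t) − y_{x0}(t)‖² dt : x̂ = x0 + w, w ∈ span{e_1, …, e_s}, ‖w‖ = ρ } = σ_min ρ², where σ_min is the smallest real number σ for which there exists a nonzero ξ ∈ ℝ^s with G ξ = σ S ξ. -/

import Mathlib

open Filter Topology

open Matrix in
private lemma aux_dot_symm {s : ℕ} (M : Matrix (Fin s) (Fin s) ℝ) (hsym : Mᵀ = M)
    (u v : Fin s → ℝ) : u ⬝ᵥ M.mulVec v = v ⬝ᵥ M.mulVec u := by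
  rw [dotProduct_mulVec, ← hsym, vecMul_transpose, hsym, dotProduct_comm]

open Matrix in
private lemma aux_psd_null {s : ℕ} (M : Matrix (Fin s) (Fin s) ℝ) (hsym : Mᵀ = M)
    (hpsd : ∀ ξ : Fin s → ℝ, 0 ≤ ξ ⬝ᵥ M.mulVec ξ)
    (x : Fin s → ℝ) (hx : x ⬝ᵥ M.mulVec x = 0) : M.mulVec x = 0 := by
  have key : ∀ y : Fin s → ℝ, y ⬝ᵥ M.mulVec x = 0 := by
    intro y
    set a := y ⬝ᵥ M.mulVec y with ha
    set b := y ⬝ᵥ M.mulVec x with hb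
    have hexp : ∀ t : ℝ, 0 ≤ a * t ^ 2 + 2 * b * t := by
      intro t
      have h0 := hpsd (x + t • y)
      have h2 : (x + t • y) ⬝ᵥ M.mulVec (x + t • y) = a * t ^ 2 + 2 * b * t := by
        simp only [mulVec_add, dotProduct_add, add_dotProduct, hx,
          mulVec_smul, smul_dotProduct, dotProduct_smul, smul_eq_mul]
        rw [aux_dot_symm M hsym x y]
        ring
      rw [h2] at h0; exact h0
    by_contra hb0
    have ha0 : 0 ≤ a := hpsd y
    have ht := hexp (-b / (a + 1))
    have hpos : 0 < a + 1 := by linarith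
    have heq : a * (-b / (a + 1)) ^ 2 + 2 * b * (-b / (a + 1))
        = (b ^ 2 / (a + 1)) * (a / (a + 1) - 2) := by field_simp; ring
    rw [heq] at ht
    have h1 : 0 < b ^ 2 / (a + 1) := by
      have : (0:ℝ) < b ^ 2 := by positivity
      positivity
    have h2 : a / (a + 1) - 2 < 0 := by
      have : a / (a + 1) < 1 := (div_lt_one hpos).2 (by linarith)
      linarith
    nlinarith
  funext i
  have := key (Pi.single i 1)
  simpa [dotProduct, Pi.single_apply] using this

open Matrix in
private lemma aux_quad_continuous {s : ℕ} (M : Matrix (Fin s) (Fin s) ℝ) :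
    Continuous (fun ξ : Fin s → ℝ => ξ ⬝ᵥ M.mulVec ξ) := by
  simp only [dotProduct, mulVec]
  exact continuous_finset_sum _ fun i _ => (continuous_apply i).mul
    (continuous_finset_sum _ fun j _ => continuous_const.mul (continuous_apply j))

open Matrix in
private lemma aux_quad_smul {s : ℕ} (M : Matrix (Fin s) (Fin s) ℝ) (c : ℝ) (ξ : Fin s → ℝ) :
    (c • ξ) ⬝ᵥ M.mulVec (c • ξ) = c ^ 2 * (ξ ⬝ᵥ M.mulVec ξ) := by
  rw [mulVec_smul, smul_dotProduct, dotProduct_smul, smul_eq_mul, smul_eq_mul]; ring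

open Matrix in
private lemma aux_rayleigh_min {s : ℕ} (hs : 0 < s) (S G : Matrix (Fin s) (Fin s) ℝ)
    (hSpd : ∀ ξ : Fin s → ℝ, ξ ≠ 0 → 0 < ξ ⬝ᵥ S.mulVec ξ) :
    ∃ ξ : Fin s → ℝ, ξ ≠ 0 ∧
      (∀ η : Fin s → ℝ, η ≠ 0 →
        (ξ ⬝ᵥ G.mulVec ξ) / (ξ ⬝ᵥ S.mulVec ξ) ≤ (η ⬝ᵥ G.mulVec η) / (η ⬝ᵥ S.mulVec η)) := by
  haveI : Nonempty (Fin s) := ⟨⟨0, hs⟩⟩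
  haveI : Nontrivial (Fin s → ℝ) := inferInstance
  set R : (Fin s → ℝ) → ℝ := fun ξ => (ξ ⬝ᵥ G.mulVec ξ) / (ξ ⬝ᵥ S.mulVec ξ) with hR
  have hRcont : ContinuousOn R (Metric.sphere (0 : Fin s → ℝ) 1) := by
    apply ContinuousOn.div (aux_quad_continuous G).continuousOn
      (aux_quad_continuous S).continuousOn
    intro ξ hξ
    have : ξ ≠ 0 := by
      intro h; rw [h] at hξ; simp at hξ
    exact ne_of_gt (hSpd ξ this)
  have hne : (Metric.sphere (0 : Fin s → ℝ) 1).Nonempty :=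
    NormedSpace.sphere_nonempty.2 zero_le_one
  obtain ⟨ξ, hmem, hmin⟩ := (isCompact_sphere (0 : Fin s → ℝ) 1).exists_isMinOn hne hRcont
  have hξne : ξ ≠ 0 := by
    intro h; rw [h] at hmem; simp at hmem
  have hhomog : ∀ (c : ℝ), c ≠ 0 → ∀ η : Fin s → ℝ, R (c • η) = R η := by
    intro c hc η
    rw [hR]
    simp only [aux_quad_smul]
    exact mul_div_mul_left _ _ (pow_ne_zero 2 hc)
  refine ⟨ξ, hξne, fun η hη => ?_⟩
  have hnorm : ‖η‖ ≠ 0 := norm_ne_zero_iff.2 hη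
  have hmem' : (‖η‖⁻¹ • η) ∈ Metric.sphere (0 : Fin s → ℝ) 1 := by
    simp [norm_smul, abs_of_nonneg (inv_nonneg.2 (norm_nonneg η)), inv_mul_cancel₀ hnorm]
  have h := hmin hmem'
  have h2 : R ξ ≤ R (‖η‖⁻¹ • η) := h
  rwa [hhomog _ (inv_ne_zero hnorm) η] at h2

open Matrix in
private lemma aux_rayleigh_eigen {s : ℕ} (hs : 0 < s) (S G : Matrix (Fin s) (Fin s) ℝ)
    (hSsym : Sᵀ = S) (hGsym : Gᵀ = G)
    (hSpd : ∀ ξ : Fin s → ℝ, ξ ≠ 0 → 0 < ξ ⬝ᵥ S.mulVec ξ) :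
    ∃ ξ : Fin s → ℝ, ξ ≠ 0 ∧
      G.mulVec ξ = ((ξ ⬝ᵥ G.mulVec ξ) / (ξ ⬝ᵥ S.mulVec ξ)) • S.mulVec ξ ∧
      (∀ η : Fin s → ℝ, η ≠ 0 →
        (ξ ⬝ᵥ G.mulVec ξ) / (ξ ⬝ᵥ S.mulVec ξ) ≤ (η ⬝ᵥ G.mulVec η) / (η ⬝ᵥ S.mulVec η)) := by
  obtain ⟨ξ, hξ, hmin⟩ := aux_rayleigh_min hs S G hSpd
  set lam := (ξ ⬝ᵥ G.mulVec ξ) / (ξ ⬝ᵥ S.mulVec ξ) with hlam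
  set M := G - lam • S with hM
  have hMsym : Mᵀ = M := by
    rw [hM, transpose_sub, transpose_smul, hSsym, hGsym]
  have hq : ∀ η, η ⬝ᵥ M.mulVec η = η ⬝ᵥ G.mulVec η - lam * (η ⬝ᵥ S.mulVec η) := by
    intro η
    rw [hM, sub_mulVec, dotProduct_sub, smul_mulVec, dotProduct_smul, smul_eq_mul]
  have hpsd : ∀ η, 0 ≤ η ⬝ᵥ M.mulVec η := by
    intro η
    by_cases hη : η = 0
    · subst hη; simp
    · have hD := hSpd η hη
      have h1 := hmin η hη
      rw [le_div_iff₀ hD] at h1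
      rw [hq]; linarith
  have hD := hSpd ξ hξ
  have hξ0 : ξ ⬝ᵥ M.mulVec ξ = 0 := by
    rw [hq, hlam, div_mul_cancel₀ _ (ne_of_gt hD), sub_self]
  have hnull := aux_psd_null M hMsym hpsd ξ hξ0
  rw [hM, sub_mulVec, smul_mulVec, sub_eq_zero] at hnull
  exact ⟨ξ, hξ, hnull, hmin⟩

private lemma aux_gram_expand {s m : ℕ} (ξ : Fin s → ℝ) (g : Fin s → Fin m → ℝ) :
    ∑ k, (∑ i, ξ i * g i k) ^ 2 = ∑ i, ∑ j, ξ i * ξ j * (∑ k, g i k * g j k) := by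
  have h1 : ∀ k : Fin m, (∑ i, ξ i * g i k) ^ 2
      = ∑ i, ∑ j, ξ i * ξ j * (g i k * g j k) := by
    intro k
    rw [sq, Finset.sum_mul_sum]
    exact Finset.sum_congr rfl fun i _ => Finset.sum_congr rfl fun j _ => by ring
  simp only [h1]
  rw [Finset.sum_comm]
  refine Finset.sum_congr rfl fun i _ => ?_
  rw [Finset.sum_comm]
  refine Finset.sum_congr rfl fun j _ => ?_
  rw [Finset.mul_sum]

open Matrix in
private lemma aux_quad_expand {s : ℕ} (M : Matrix (Fin s) (Fin s) ℝ) (ξ : Fin s → ℝ) :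
    ξ ⬝ᵥ M.mulVec ξ = ∑ i, ∑ j, ξ i * ξ j * M i j := by
  simp only [dotProduct, mulVec, Finset.mul_sum]
  exact Finset.sum_congr rfl fun i _ => Finset.sum_congr rfl fun j _ => by ring

open Matrix in
private lemma aux_mulVec_sum_smul {a b s : ℕ} (M : Matrix (Fin a) (Fin b) ℝ)
    (ξ : Fin s → ℝ) (v : Fin s → Fin b → ℝ) :
    M.mulVec (∑ i, ξ i • v i) = ∑ i, ξ i • M.mulVec (v i) := by
  rw [← Matrix.mulVecLin_apply, map_sum]
  refine Finset.sum_congr rfl fun i _ => ?_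
  rw [_root_.map_smul, Matrix.mulVecLin_apply]

open Matrix

/-- For a linear system with a (not necessarily orthonormal) basis `e` of the estimation
space, the unobservability level is given by the smallest generalized eigenvalue of the
pencil `(G, S)`: the infimum of the squared `L²` output deviation over perturbations `w`
in the span of `e` of Euclidean norm `ρ` equals `σ_min · ρ²`. -/
theorem empirical_gramian_generalized_eigenvalue
    (n p s : ℕ) (hn : 0 < n) (hp : 0 < p) (hs : 0 < s)
    (A : Matrix (Fin n) (Fin n) ℝ) (C : Matrix (Fin p) (Fin n) ℝ)
    (T ρ : ℝ) (hT : 0 < T) (hρ : 0 < ρ)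
    -- the output map `y_x(t) = C e^{tA} x`
    (y : (Fin n → ℝ) → ℝ → (Fin p → ℝ))
    (hy : ∀ x t, y x t = C.mulVec ((NormedSpace.exp (t • A)).mulVec x))
    -- a linearly independent family in ℝⁿ and its Gram matrix `S`
    (e : Fin s → (Fin n → ℝ)) (he : LinearIndependent ℝ e)
    (S : Matrix (Fin s) (Fin s) ℝ)
    (hS : ∀ i j, S i j = ∑ k, e i k * e j k)
    (x0 : Fin n → ℝ)
    -- the output deviations `Δy_i` and the empirical Gramian `G`
    (Δy : Fin s → ℝ → (Fin p → ℝ))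
    (hΔy : ∀ i t, Δy i t = y (x0 + ρ • e i) t - y (x0 - ρ • e i) t)
    (G : Matrix (Fin s) (Fin s) ℝ)
    (hG : ∀ i j, G i j = (1 / (4 * ρ ^ 2)) * ∫ t in (0:ℝ)..T, ∑ k, Δy i t k * Δy j t k)
    -- `σmin` is the smallest generalized eigenvalue: `G ξ = σ S ξ` for some `ξ ≠ 0`
    (σmin : ℝ)
    (hσ : IsLeast {σ : ℝ | ∃ ξ : Fin s → ℝ, ξ ≠ 0 ∧ G.mulVec ξ = σ • S.mulVec ξ} σmin) :
    sInf {r : ℝ | ∃ w : Fin n → ℝ, w ∈ Submodule.span ℝ (Set.range e) ∧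
        Real.sqrt (∑ k, (w k) ^ 2) = ρ ∧
        r = ∫ t in (0:ℝ)..T, ∑ k, (y (x0 + w) t k - y x0 t k) ^ 2} =
      σmin * ρ ^ 2 := by
  classical
  have hρ2 : (0:ℝ) < ρ ^ 2 := by positivity
  set E : ℝ → Matrix (Fin n) (Fin n) ℝ := fun t => NormedSpace.exp (t • A) with hE
  set f : Fin s → ℝ → (Fin p → ℝ) := fun i t => C.mulVec ((E t).mulVec (e i)) with hf
  -- continuity of matrix exponential entries
  have hEcont : ∀ i j : Fin n, Continuous fun t : ℝ => E t i j := by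
    intro i j
    letI : SeminormedRing (Matrix (Fin n) (Fin n) ℝ) := Matrix.linftyOpSemiNormedRing
    letI : NormedRing (Matrix (Fin n) (Fin n) ℝ) := Matrix.linftyOpNormedRing
    letI : NormedAlgebra ℝ (Matrix (Fin n) (Fin n) ℝ) := Matrix.linftyOpNormedAlgebra
    have h1 : Continuous (fun t : ℝ => NormedSpace.exp (t • A)) :=
      (continuous_iff_continuousAt.2 fun x => (NormedSpace.exp_analytic (𝕂 := ℝ) x).continuousAt).comp
        (continuous_id.smul continuous_const)
    exact ((continuous_apply j).comp (continuous_apply i)).comp h1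
  have hfc : ∀ (i : Fin s) (k : Fin p), Continuous fun t => f i t k := by
    intro i k
    rw [hf]
    simp only [Matrix.mulVec, dotProduct]
    exact continuous_finset_sum _ fun j _ => continuous_const.mul
      (continuous_finset_sum _ fun l _ => (hEcont j l).mul continuous_const)
  have hint : ∀ i j : Fin s, IntervalIntegrable
      (fun t => ∑ k, f i t k * f j t k) MeasureTheory.volume 0 T :=
    fun i j => (continuous_finset_sum _ fun k _ =>
      (hfc i k).mul (hfc j k)).intervalIntegrable 0 T
  -- Δy in terms of f
  have hΔ : ∀ i t, Δy i t = (2 * ρ) • f i t := by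
    intro i t
    rw [hΔy, hy, hy, ← Matrix.mulVec_sub, ← Matrix.mulVec_sub]
    have h2 : (x0 + ρ • e i) - (x0 - ρ • e i) = (2 * ρ) • e i := by
      funext k
      simp only [Pi.sub_apply, Pi.add_apply, Pi.smul_apply, smul_eq_mul]
      ring
    rw [h2, Matrix.mulVec_smul, Matrix.mulVec_smul, hf]
  -- G in terms of f
  have hG' : ∀ i j, G i j = ∫ t in (0:ℝ)..T, ∑ k, f i t k * f j t k := by
    intro i j
    rw [hG]
    have h1 : ∀ t, (∑ k, Δy i t k * Δy j t k) = (4 * ρ ^ 2) * ∑ k, f i t k * f j t k := by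
      intro t
      simp only [hΔ, Pi.smul_apply, smul_eq_mul, Finset.mul_sum]
      exact Finset.sum_congr rfl fun k _ => by ring
    simp only [h1]
    rw [intervalIntegral.integral_const_mul, ← mul_assoc, one_div,
      inv_mul_cancel₀ (by positivity : (4:ℝ) * ρ ^ 2 ≠ 0), one_mul]
  -- quadratic form of S via w
  have hw_entry : ∀ (ξ : Fin s → ℝ) (k : Fin n), (∑ i, ξ i • e i) k = ∑ i, ξ i * e i k := by
    intro ξ k
    simp [Finset.sum_apply]
  have hSq : ∀ ξ : Fin s → ℝ, ∑ k, ((∑ i, ξ i • e i) k) ^ 2 = ξ ⬝ᵥ S.mulVec ξ := by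
    intro ξ
    simp only [hw_entry]
    rw [aux_gram_expand, aux_quad_expand]
    exact Finset.sum_congr rfl fun i _ => Finset.sum_congr rfl fun j _ => by rw [hS]
  -- output difference in terms of f
  have hdiff : ∀ (ξ : Fin s → ℝ) (t : ℝ) (k : Fin p),
      y (x0 + ∑ i, ξ i • e i) t k - y x0 t k = ∑ i, ξ i * f i t k := by
    intro ξ t k
    have h0 : y (x0 + ∑ i, ξ i • e i) t - y x0 t = ∑ i, ξ i • f i t := by
      rw [hy, hy, ← Matrix.mulVec_sub, ← Matrix.mulVec_sub, add_sub_cancel_left,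
        aux_mulVec_sum_smul, aux_mulVec_sum_smul, hf]
    have := congrFun h0 k
    simpa [Finset.sum_apply] using this
  clear_value f E
  clear hf hE hy hG hΔy hΔ
  -- quadratic form of G via the output integral
  have hGq : ∀ ξ : Fin s → ℝ,
      (∫ t in (0:ℝ)..T, ∑ k, (y (x0 + ∑ i, ξ i • e i) t k - y x0 t k) ^ 2)
        = ξ ⬝ᵥ G.mulVec ξ := by
    intro ξ
    have hdiff := hdiff ξ
    have hintegrand : ∀ t, (∑ k, (y (x0 + ∑ i, ξ i • e i) t k - y x0 t k) ^ 2)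
        = ∑ i, ∑ j, ξ i * ξ j * (∑ k, f i t k * f j t k) := by
      intro t
      simp only [hdiff]
      exact aux_gram_expand ξ (fun i => f i t)
    rw [intervalIntegral.integral_congr (g := fun t =>
      ∑ i, ∑ j, ξ i * ξ j * (∑ k, f i t k * f j t k)) (fun t _ => hintegrand t)]
    have hI : ∀ i j : Fin s, IntervalIntegrable
        (fun x => ξ i * ξ j * ∑ k, f i x k * f j x k) MeasureTheory.volume 0 T :=
      fun i j => (hint i j).const_mul _
    have hs2 : ∀ i : Fin s, (∫ x in (0:ℝ)..T, ∑ j, ξ i * ξ j * ∑ k, f i x k * f j x k)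
        = ∑ j, ∫ x in (0:ℝ)..T, ξ i * ξ j * ∑ k, f i x k * f j x k := fun i =>
      intervalIntegral.integral_finset_sum (fun j _ => hI i j)
    have hIsum : ∀ i : Fin s, IntervalIntegrable
        (fun x => ∑ j, ξ i * ξ j * ∑ k, f i x k * f j x k) MeasureTheory.volume 0 T :=
      fun i => (continuous_finset_sum _ fun j _ => continuous_const.mul
        (continuous_finset_sum _ fun k _ => (hfc i k).mul (hfc j k))).intervalIntegrable 0 T
    have hs1 : (∫ x in (0:ℝ)..T, ∑ i, ∑ j, ξ i * ξ j * ∑ k, f i x k * f j x k)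
        = ∑ i, ∫ x in (0:ℝ)..T, ∑ j, ξ i * ξ j * ∑ k, f i x k * f j x k :=
      intervalIntegral.integral_finset_sum (fun i _ => hIsum i)
    rw [hs1]
    rw [aux_quad_expand]
    refine Finset.sum_congr rfl fun i _ => ?_
    rw [hs2 i]
    refine Finset.sum_congr rfl fun j _ => ?_
    rw [intervalIntegral.integral_const_mul, hG']
  -- S is positive definite
  have hSpd : ∀ ξ : Fin s → ℝ, ξ ≠ 0 → 0 < ξ ⬝ᵥ S.mulVec ξ := by
    intro ξ hξ
    rw [← hSq ξ]
    have hwne : (∑ i, ξ i • e i) ≠ 0 := by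
      intro h
      apply hξ
      funext i
      exact (Fintype.linearIndependent_iff.1 he) ξ h i
    have hnonneg : ∀ k ∈ Finset.univ, (0:ℝ) ≤ ((∑ i, ξ i • e i) k) ^ 2 :=
      fun k _ => sq_nonneg _
    rcases eq_or_lt_of_le (Finset.sum_nonneg hnonneg) with h | h
    · exfalso
      apply hwne
      funext k
      have hk := (Finset.sum_eq_zero_iff_of_nonneg hnonneg).1 h.symm k (Finset.mem_univ k)
      have : (∑ i, ξ i • e i) k = 0 := by
        have := sq_eq_zero_iff.1 hk
        exact this
      exact this
    · exact h
  -- symmetry of S and G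
  have hSsym : Sᵀ = S := by
    ext i j
    rw [Matrix.transpose_apply, hS, hS]
    exact Finset.sum_congr rfl fun k _ => mul_comm _ _
  have hGsym : Gᵀ = G := by
    ext i j
    rw [Matrix.transpose_apply, hG', hG']
    have : ∀ t : ℝ, (∑ k, f j t k * f i t k) = ∑ k, f i t k * f j t k :=
      fun t => Finset.sum_congr rfl fun k _ => mul_comm _ _
    simp only [this]
  -- the variational characterization of σmin
  obtain ⟨ξm, hξm, heig, hminR⟩ := aux_rayleigh_eigen hs S G hSsym hGsym hSpd
  have h1 : σmin ≤ (ξm ⬝ᵥ G.mulVec ξm) / (ξm ⬝ᵥ S.mulVec ξm) := hσ.2 ⟨ξm, hξm, heig⟩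
  obtain ⟨ξ0, hξ0, heig0⟩ := hσ.1
  have hD0 : 0 < ξ0 ⬝ᵥ S.mulVec ξ0 := hSpd ξ0 hξ0
  have hq0 : ξ0 ⬝ᵥ G.mulVec ξ0 = σmin * (ξ0 ⬝ᵥ S.mulVec ξ0) := by
    rw [heig0, dotProduct_smul, smul_eq_mul]
  have hR0 : (ξ0 ⬝ᵥ G.mulVec ξ0) / (ξ0 ⬝ᵥ S.mulVec ξ0) = σmin := by
    rw [hq0, mul_div_assoc, div_self (ne_of_gt hD0), mul_one]
  have h2 : (ξm ⬝ᵥ G.mulVec ξm) / (ξm ⬝ᵥ S.mulVec ξm) ≤ σmin := hR0 ▸ hminR ξ0 hξ0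
  have hlower : ∀ η : Fin s → ℝ, η ≠ 0 → σmin * (η ⬝ᵥ S.mulVec η) ≤ η ⬝ᵥ G.mulVec η := by
    intro η hη
    have h3 := hminR η hη
    have h4 : σmin ≤ (η ⬝ᵥ G.mulVec η) / (η ⬝ᵥ S.mulVec η) := le_trans h1 h3
    exact (le_div_iff₀ (hSpd η hη)).1 h4
  -- the witness element
  set c := ρ / Real.sqrt (ξ0 ⬝ᵥ S.mulVec ξ0) with hc
  have hc2 : c ^ 2 = ρ ^ 2 / (ξ0 ⬝ᵥ S.mulVec ξ0) := by
    rw [hc, div_pow, Real.sq_sqrt (le_of_lt hD0)]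
  have hqS1 : (c • ξ0) ⬝ᵥ S.mulVec (c • ξ0) = ρ ^ 2 := by
    rw [aux_quad_smul, hc2, div_mul_cancel₀ _ (ne_of_gt hD0)]
  have hqG1 : (c • ξ0) ⬝ᵥ G.mulVec (c • ξ0) = σmin * ρ ^ 2 := by
    rw [aux_quad_smul, hq0, hc2]
    field_simp
  have hmem : σmin * ρ ^ 2 ∈ {r : ℝ | ∃ w : Fin n → ℝ,
      w ∈ Submodule.span ℝ (Set.range e) ∧
      Real.sqrt (∑ k, (w k) ^ 2) = ρ ∧
      r = ∫ t in (0:ℝ)..T, ∑ k, (y (x0 + w) t k - y x0 t k) ^ 2} := by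
    refine ⟨∑ i, (c • ξ0) i • e i, ?_, ?_, ?_⟩
    · exact Submodule.sum_mem _ fun i _ =>
        Submodule.smul_mem _ _ (Submodule.subset_span (Set.mem_range_self i))
    · rw [hSq, hqS1, Real.sqrt_sq hρ.le]
    · rw [hGq, hqG1]
  have hlb : ∀ r ∈ {r : ℝ | ∃ w : Fin n → ℝ,
      w ∈ Submodule.span ℝ (Set.range e) ∧
      Real.sqrt (∑ k, (w k) ^ 2) = ρ ∧
      r = ∫ t in (0:ℝ)..T, ∑ k, (y (x0 + w) t k - y x0 t k) ^ 2},
      σmin * ρ ^ 2 ≤ r := by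
    rintro r ⟨w, hwspan, hwnorm, hrint⟩
    obtain ⟨ξ, hξw⟩ := (Submodule.mem_span_range_iff_exists_fun ℝ).1 hwspan
    have hξne : ξ ≠ 0 := by
      intro h
      rw [h] at hξw
      simp only [Pi.zero_apply, zero_smul, Finset.sum_const_zero] at hξw
      rw [← hξw] at hwnorm
      have h0 : ∑ k, ((0 : Fin n → ℝ) k) ^ 2 = 0 := by simp
      rw [h0, Real.sqrt_zero] at hwnorm
      exact absurd hwnorm.symm (ne_of_gt hρ)
    have hwq : ∑ k, (w k) ^ 2 = ρ ^ 2 := by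
      have h5 : Real.sqrt (∑ k, (w k) ^ 2) ^ 2 = ρ ^ 2 := by rw [hwnorm]
      rwa [Real.sq_sqrt (Finset.sum_nonneg fun k _ => sq_nonneg _)] at h5
    have hqSξ : ξ ⬝ᵥ S.mulVec ξ = ρ ^ 2 := by
      rw [← hSq ξ, hξw, hwq]
    have hr : r = ξ ⬝ᵥ G.mulVec ξ := by
      rw [hrint, ← hGq ξ, hξw]
    rw [hr]
    calc σmin * ρ ^ 2 = σmin * (ξ ⬝ᵥ S.mulVec ξ) := by rw [hqSξ]
      _ ≤ ξ ⬝ᵥ G.mulVec ξ := hlower ξ hξne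
  refine le_antisymm (csInf_le ⟨σmin * ρ ^ 2, hlb⟩ hmem) (le_csInf ⟨_, hmem⟩ hlb)
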